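/- arXiv:2303.16596 — 6 statements merged into one kernel-verified Lean document; each statement's English description precedes it below -/
import Mathlib

section
/- For all natural numbers k, l ≥ 1 and all real s ∈ (0,1), we have (k+l)·s^(k+l-1) − k·s^(k-1) − l < 0. -/
theorem stmt_0 (k l : ℕ) (hk : 1 ≤ k) (hl : 1 ≤ l) (s : ℝ) (hs0 : 0 < s) (hs1 : s < 1) :
    ((k + l : ℕ) : ℝ) * s ^ (k + l - 1) - (k : ℝ) * s ^ (k - 1) - (l : ℝ) < 0 := by
  have h1 : s ^ (k + l - 1) < 1 := pow_lt_one₀ hs0.le hs1 (by omega)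
  have h2 : s ^ (k + l - 1) ≤ s ^ (k - 1) :=
    pow_le_pow_of_le_one hs0.le hs1.le (by omega)
  have hk1 : (1 : ℝ) ≤ k := by exact_mod_cast hk
  have hl1 : (1 : ℝ) ≤ l := by exact_mod_cast hl
  push_cast
  nlinarith [pow_pos hs0 (k + l - 1)]
end

section
/- Let D be a positive-integer-valued random variable with finite mean and probability mass function (p_j)_{j≥1}, let (r_j)_{j≥1} be a sequence in [0,1] with E[r_D] = α, and let η ∈ (0,1] satisfy E[D(1−r_D)η^(D−1)] = E[D(η − r_D)]. Define ρ(r) = 1 − α − 2E[D r_D]η − Σ_{i≥1} p_i(1−r_i)η^i. Then ρ(r) ≤ 1 − α − 2(E[D r_D])²/E[D]. -/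
/-- Upper bound `ρ(r) ≤ 1 - α - 2 E[D r_D]² / E[D]`. -/
theorem stmt_4 (p : ℕ → ℝ) (r : ℕ → ℝ) (α : ℝ)
    (hp : ∀ j, 0 ≤ p j) (hp0 : p 0 = 0) (hpsum : ∑' j, p j = 1)
    (hμ : Summable fun j : ℕ => (j : ℝ) * p j)
    (hr : ∀ j, r j ∈ Set.Icc (0 : ℝ) 1)
    (hα : ∑' j, p j * r j = α)
    (η : ℝ) (hη0 : 0 < η) (hη1 : η ≤ 1)
    (hfix : (∑' j : ℕ, (j : ℝ) * p j * (1 - r j) * η ^ (j - 1))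
      = ∑' j : ℕ, (j : ℝ) * p j * (η - r j))
    (ρ : ℝ)
    (hρ : ρ = 1 - α - 2 * (∑' j : ℕ, (j : ℝ) * p j * r j) * η
      - ∑' i, p i * (1 - r i) * η ^ i) :
    ρ ≤ 1 - α - 2 * (∑' j : ℕ, (j : ℝ) * p j * r j) ^ 2 / (∑' j : ℕ, (j : ℝ) * p j) := by
  set M := ∑' j : ℕ, (j : ℝ) * p j * r j with hMdef
  set μ := ∑' j : ℕ, (j : ℝ) * p j with hmudef
  have hterm_nonneg : ∀ j : ℕ, 0 ≤ (j : ℝ) * p j * r j := fun j =>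
    mul_nonneg (mul_nonneg (Nat.cast_nonneg j) (hp j)) (hr j).1
  have hMr : Summable fun j : ℕ => (j : ℝ) * p j * r j := by
    apply Summable.of_nonneg_of_le hterm_nonneg (fun j => ?_) hμ
    calc (j : ℝ) * p j * r j ≤ (j : ℝ) * p j * 1 :=
          mul_le_mul_of_nonneg_left (hr j).2 (mul_nonneg (Nat.cast_nonneg j) (hp j))
      _ = (j : ℝ) * p j := by ring
  -- μ > 0
  have hμpos : 0 < μ := by
    by_contra h
    push_neg at h
    have hzero : ∀ j, p j = 0 := by
      intro j
      by_contra hj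
      have hpj : 0 < p j := lt_of_le_of_ne (hp j) (Ne.symm hj)
      have hj0 : j ≠ 0 := by
        intro h0; rw [h0, hp0] at hpj; exact lt_irrefl 0 hpj
      have h1 : (1 : ℝ) ≤ (j : ℝ) := by exact_mod_cast Nat.one_le_iff_ne_zero.mpr hj0
      have : (j : ℝ) * p j ≤ μ :=
        Summable.le_tsum hμ j (fun i _ => mul_nonneg (Nat.cast_nonneg i) (hp i))
      nlinarith
    have : (∑' j, p j) = 0 := by
      simp [funext hzero]
    rw [hpsum] at this; norm_num at this
  have hMnonneg : 0 ≤ M := tsum_nonneg hterm_nonneg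
  -- split the RHS of hfix
  have hsplit : (∑' j : ℕ, (j : ℝ) * p j * (η - r j)) = η * μ - M := by
    have h1 : (fun j : ℕ => (j : ℝ) * p j * (η - r j))
        = fun j : ℕ => η * ((j : ℝ) * p j) - (j : ℝ) * p j * r j := by
      funext j; ring
    rw [h1, Summable.tsum_sub (hμ.mul_left η) hMr, tsum_mul_left]
  have hlhs_nonneg : 0 ≤ ∑' j : ℕ, (j : ℝ) * p j * (1 - r j) * η ^ (j - 1) :=
    tsum_nonneg fun j =>
      mul_nonneg (mul_nonneg (mul_nonneg (Nat.cast_nonneg j) (hp j))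
        (by linarith [(hr j).2])) (pow_nonneg hη0.le _)
  have hMle : M ≤ η * μ := by
    have := hfix
    rw [hsplit] at this
    linarith [hlhs_nonneg.trans_eq this]
  have hS : 0 ≤ ∑' i, p i * (1 - r i) * η ^ i :=
    tsum_nonneg fun i =>
      mul_nonneg (mul_nonneg (hp i) (by linarith [(hr i).2])) (pow_nonneg hη0.le _)
  have hdiv : M ^ 2 / μ ≤ M * η := by
    rw [div_le_iff₀ hμpos]
    nlinarith
  have h2 : 2 * M ^ 2 / μ = 2 * (M ^ 2 / μ) := by ring
  linarith
end

section
/- Let D be a positive-integer-valued random variable with finite mean E[D], let (r_j)_{j≥1} ⊂ [0,1], and let η ∈ (0,1] satisfy the half-edge extinction equation. Define the edge proportion e(r) = (E[D]/2)(1 − η²) − E[D r_D](1 − η). Then 0 ≤ e(r) ≤ E[D(1−r_D)]²/(2E[D]). -/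
/-- Bounds on the limiting edge proportion:
`0 ≤ e(r) ≤ E[D(1-r_D)]²/(2 E[D])`. -/
theorem stmt_7 (p : ℕ → ℝ) (r : ℕ → ℝ)
    (hp : ∀ j, 0 ≤ p j) (hp0 : p 0 = 0) (hpsum : ∑' j, p j = 1)
    (hμ : Summable fun j : ℕ => (j : ℝ) * p j)
    (hr : ∀ j, r j ∈ Set.Icc (0 : ℝ) 1)
    (η : ℝ) (hη0 : 0 < η) (hη1 : η ≤ 1)
    (hfix : (∑' j : ℕ, (j : ℝ) * p j * (1 - r j) * η ^ (j - 1)) + (∑' j : ℕ, (j : ℝ) * p j * r j)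
      = η * ∑' j : ℕ, (j : ℝ) * p j)
    (e : ℝ)
    (he : e = (∑' j : ℕ, (j : ℝ) * p j) / 2 * (1 - η ^ 2)
      - (∑' j : ℕ, (j : ℝ) * p j * r j) * (1 - η)) :
    0 ≤ e ∧ e ≤ (∑' j : ℕ, (j : ℝ) * p j * (1 - r j)) ^ 2 / (2 * ∑' j : ℕ, (j : ℝ) * p j) := by
  set μ := ∑' j : ℕ, (j : ℝ) * p j with hμdef
  set A := ∑' j : ℕ, (j : ℝ) * p j * r j with hAdef
  set S := ∑' j : ℕ, (j : ℝ) * p j * (1 - r j) * η ^ (j - 1) with hSdef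
  have hterm_nonneg : ∀ j : ℕ, 0 ≤ (j : ℝ) * p j := fun j =>
    mul_nonneg (Nat.cast_nonneg j) (hp j)
  -- Summability of p
  have hpsummable : Summable p := by
    apply hμ.of_nonneg_of_le hp
    intro j
    cases j with
    | zero => simp [hp0]
    | succ n =>
      have : (1 : ℝ) ≤ ((n + 1 : ℕ) : ℝ) := by exact_mod_cast Nat.one_le_iff_ne_zero.2 (Nat.succ_ne_zero n)
      nlinarith [hp (n + 1)]
  -- μ ≥ 1
  have hμ1 : (1 : ℝ) ≤ μ := by
    rw [← hpsum]
    apply Summable.tsum_le_tsum _ hpsummable hμ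
    intro j
    cases j with
    | zero => simp [hp0]
    | succ n =>
      have : (1 : ℝ) ≤ ((n + 1 : ℕ) : ℝ) := by exact_mod_cast Nat.one_le_iff_ne_zero.2 (Nat.succ_ne_zero n)
      nlinarith [hp (n + 1)]
  have hμpos : 0 < μ := lt_of_lt_of_le one_pos hμ1
  -- S ≥ 0
  have hSnonneg : 0 ≤ S := by
    apply tsum_nonneg
    intro j
    have h1 : 0 ≤ 1 - r j := by linarith [(hr j).2]
    have h2 : 0 ≤ η ^ (j - 1) := pow_nonneg hη0.le _
    exact mul_nonneg (mul_nonneg (hterm_nonneg j) h1) h2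
  -- A ≥ 0
  have hAnonneg : 0 ≤ A := by
    apply tsum_nonneg
    intro j
    exact mul_nonneg (hterm_nonneg j) (hr j).1
  -- summability of A's terms
  have hAsummable : Summable fun j : ℕ => (j : ℝ) * p j * r j := by
    apply hμ.of_nonneg_of_le (fun j => mul_nonneg (hterm_nonneg j) (hr j).1)
    intro j
    calc (j : ℝ) * p j * r j ≤ (j : ℝ) * p j * 1 :=
          mul_le_mul_of_nonneg_left (hr j).2 (hterm_nonneg j)
      _ = (j : ℝ) * p j := mul_one _
  -- B = μ - A
  have hB : (∑' j : ℕ, (j : ℝ) * p j * (1 - r j)) = μ - A := by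
    have : ∀ j : ℕ, (j : ℝ) * p j * (1 - r j) = (j : ℝ) * p j - (j : ℝ) * p j * r j := by
      intro j; ring
    rw [tsum_congr this, Summable.tsum_sub hμ hAsummable]
  -- key inequality: η μ - A = S ≥ 0
  have hkey : A ≤ η * μ := by linarith [hfix]
  constructor
  · -- 0 ≤ e
    have h1 : 0 ≤ (1 - η) * (η * μ - A) :=
      mul_nonneg (by linarith) (by linarith)
    have h2 : 0 ≤ μ * (1 - η) ^ 2 / 2 := by positivity
    nlinarith [h1, h2]
  · rw [hB, le_div_iff₀ (by positivity : (0 : ℝ) < 2 * μ)]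
    nlinarith [sq_nonneg (η * μ - A)]
end

section
/- Let (p_j)_{j≥1} be a pmf with finite first moment, r an α-sequence, and define the exploded degree distribution by p̃_1 = β_r^{-1}(E[D r_D] + p_1(1−r_1)) and p̃_i = β_r^{-1} p_i(1−r_i) for i ≥ 2, where β_r = E[D r_D] + 1 − α. Then (p̃_i)_{i≥1} is a probability mass function, and its size-biased criticality condition satisfies: E[D̃(D̃−2)] > 0 if and only if E[D(D−1)(1−r_D)] > E[D], where D̃ has pmf (p̃_i). -/
/-- The exploded degree distribution is a pmf, and `E[D̃(D̃-2)] > 0` iff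
`E[D(D-1)(1-r_D)] > E[D]`. -/
theorem stmt_9 (p : ℕ → ℝ) (r : ℕ → ℝ) (α : ℝ)
    (hp : ∀ j, 0 ≤ p j) (hp0 : p 0 = 0) (hpsum : ∑' j, p j = 1)
    (hμ : Summable fun j : ℕ => (j : ℝ) * p j)
    (hμ2 : Summable fun j : ℕ => (j : ℝ) ^ 2 * p j)
    (hr : ∀ j, r j ∈ Set.Icc (0 : ℝ) 1)
    (hα : ∑' j, p j * r j = α)
    (β : ℝ) (hβ : β = (∑' j : ℕ, (j : ℝ) * p j * r j) + 1 - α)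
    (ptilde : ℕ → ℝ)
    (hpt : ∀ i, ptilde i =
      if i = 1 then ((∑' j : ℕ, (j : ℝ) * p j * r j) + p 1 * (1 - r 1)) / β
      else p i * (1 - r i) / β) :
    (∀ i, 0 ≤ ptilde i) ∧ (∑' i, ptilde i) = 1 ∧
    ((∑' i : ℕ, (i : ℝ) * ((i : ℝ) - 2) * ptilde i) > 0 ↔
      (∑' j : ℕ, (j : ℝ) * ((j : ℝ) - 1) * (1 - r j) * p j) > ∑' j : ℕ, (j : ℝ) * p j) := by
  have hr0 : ∀ j, 0 ≤ r j := fun j => (hr j).1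
  have hr1 : ∀ j, r j ≤ 1 := fun j => (hr j).2
  have h1r0 : ∀ j, 0 ≤ 1 - r j := fun j => by linarith [hr1 j]
  have h1r1 : ∀ j, 1 - r j ≤ 1 := fun j => by linarith [hr0 j]
  set A : ℝ := ∑' j : ℕ, (j : ℝ) * p j * r j with hA
  -- summability facts
  have hSp : Summable p := by
    by_contra h
    rw [tsum_eq_zero_of_not_summable h] at hpsum
    norm_num at hpsum
  have hSpr : Summable (fun j => p j * r j) :=
    Summable.of_nonneg_of_le (fun j => mul_nonneg (hp j) (hr0 j))
      (fun j => mul_le_of_le_one_right (hp j) (hr1 j)) hSp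
  have hSjpr : Summable (fun j : ℕ => (j : ℝ) * p j * r j) :=
    Summable.of_nonneg_of_le
      (fun j => mul_nonneg (mul_nonneg (Nat.cast_nonneg j) (hp j)) (hr0 j))
      (fun j => mul_le_of_le_one_right (mul_nonneg (Nat.cast_nonneg j) (hp j)) (hr1 j)) hμ
  have hSp1r : Summable (fun j => p j * (1 - r j)) :=
    Summable.of_nonneg_of_le (fun j => mul_nonneg (hp j) (h1r0 j))
      (fun j => mul_le_of_le_one_right (hp j) (h1r1 j)) hSp
  have hSjp1r : Summable (fun j : ℕ => (j : ℝ) * p j * (1 - r j)) :=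
    Summable.of_nonneg_of_le
      (fun j => mul_nonneg (mul_nonneg (Nat.cast_nonneg j) (hp j)) (h1r0 j))
      (fun j => mul_le_of_le_one_right (mul_nonneg (Nat.cast_nonneg j) (hp j)) (h1r1 j)) hμ
  have hSj2p1r : Summable (fun j : ℕ => (j : ℝ) ^ 2 * p j * (1 - r j)) :=
    Summable.of_nonneg_of_le
      (fun j => mul_nonneg (mul_nonneg (by positivity) (hp j)) (h1r0 j))
      (fun j => mul_le_of_le_one_right (mul_nonneg (by positivity) (hp j)) (h1r1 j)) hμ2
  have hT : Summable (fun i : ℕ => (i : ℝ) * ((i : ℝ) - 2) * p i * (1 - r i)) :=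
    (hSj2p1r.sub (hSjp1r.mul_left 2)).congr (fun i => by ring)
  have hSii1 : Summable (fun i : ℕ => (i : ℝ) * ((i : ℝ) - 1) * (1 - r i) * p i) :=
    (hSj2p1r.sub hSjp1r).congr (fun i => by ring)
  -- β is positive
  have hαleA : α ≤ A := by
    rw [← hα]
    refine Summable.tsum_le_tsum (fun j => ?_) hSpr hSjpr
    rcases Nat.eq_zero_or_pos j with h | h
    · simp [h, hp0]
    · have hj : (1 : ℝ) ≤ j := by exact_mod_cast h
      nlinarith [mul_nonneg (hp j) (hr0 j)]
  have hβpos : 0 < β := by rw [hβ]; linarith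
  have hA0 : 0 ≤ A := tsum_nonneg (fun j =>
    mul_nonneg (mul_nonneg (Nat.cast_nonneg j) (hp j)) (hr0 j))
  -- nonnegativity
  have hnonneg : ∀ i, 0 ≤ ptilde i := by
    intro i
    rw [hpt i]
    split_ifs with h
    · exact div_nonneg (add_nonneg hA0 (mul_nonneg (hp 1) (h1r0 1))) hβpos.le
    · exact div_nonneg (mul_nonneg (hp i) (h1r0 i)) hβpos.le
  refine ⟨hnonneg, ?_, ?_⟩
  -- sum is 1
  · have hptfun : ptilde = fun i => p i * (1 - r i) / β + (if i = 1 then A / β else 0) := by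
      funext i
      rw [hpt i]
      split_ifs with h
      · subst h; ring
      · simp
    have hIf : Summable (fun i : ℕ => if i = 1 then A / β else 0) :=
      summable_of_ne_finset_zero (s := {1}) (fun i hi => by
        simp only [Finset.mem_singleton] at hi; simp [hi])
    rw [hptfun, Summable.tsum_add (hSp1r.div_const β) hIf, tsum_ite_eq, tsum_div_const]
    have h1 : ∑' i, p i * (1 - r i) = 1 - α := by
      have : ∑' i, p i * (1 - r i) = ∑' i, (p i - p i * r i) :=
        tsum_congr (fun i => by ring)
      rw [this, Summable.tsum_sub hSp hSpr, hpsum, hα]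
    rw [h1]
    field_simp
    linarith
  -- criticality
  · have hgfun : (fun i : ℕ => (i : ℝ) * ((i : ℝ) - 2) * ptilde i) =
        fun i : ℕ => (i : ℝ) * ((i : ℝ) - 2) * p i * (1 - r i) / β +
          (if i = 1 then -A / β else 0) := by
      funext i
      rw [hpt i]
      split_ifs with h
      · subst h; push_cast; ring
      · simp; ring
    have hIf : Summable (fun i : ℕ => if i = 1 then -A / β else 0) :=
      summable_of_ne_finset_zero (s := {1}) (fun i hi => by
        simp only [Finset.mem_singleton] at hi; simp [hi])
    rw [hgfun, Summable.tsum_add (hT.div_const β) hIf, tsum_ite_eq, tsum_div_const]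
    set T : ℝ := ∑' i : ℕ, (i : ℝ) * ((i : ℝ) - 2) * p i * (1 - r i) with hTdef
    set S1 : ℝ := ∑' j : ℕ, (j : ℝ) * ((j : ℝ) - 1) * (1 - r j) * p j with hS1def
    set S2 : ℝ := ∑' j : ℕ, (j : ℝ) * p j with hS2def
    have hkey : T - A = S1 - S2 := by
      have hc : ∑' i : ℕ, ((i : ℝ) * ((i : ℝ) - 2) * p i * (1 - r i) - (i : ℝ) * p i * r i) =
          ∑' i : ℕ, ((i : ℝ) * ((i : ℝ) - 1) * (1 - r i) * p i - (i : ℝ) * p i) :=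
        tsum_congr (fun i => by ring)
      rw [Summable.tsum_sub hT hSjpr, Summable.tsum_sub hSii1 hμ] at hc
      exact hc
    have heq : T / β + -A / β = (T - A) / β := by ring
    rw [heq, gt_iff_lt, lt_div_iff₀ hβpos, zero_mul, gt_iff_lt]
    constructor <;> intro h <;> linarith
end

section
/- Let g: [0,1] → ℝ be the probability generating function of a positive-integer-valued random variable D̃ with p̃_1 > 0, and let c > 0. If η ∈ (0,1) satisfies g'(η) = c·η and also g'(1) = c (i.e. η and 1 are both roots of h(x) = g'(x) − cx), then g''(η) < c. -/
/-- If `η ∈ (0,1)` satisfies `g'(η) = cη` and `g'(1) = c`, then `g''(η) < c`. -/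
theorem stmt_10 (q : ℕ → ℝ) (c : ℝ)
    (hq : ∀ j, 0 ≤ q j) (hq0 : q 0 = 0) (hqsum : ∑' j, q j = 1) (hq1 : 0 < q 1)
    (hμ2 : Summable fun j : ℕ => (j : ℝ) ^ 2 * q j)
    (hc : 0 < c)
    (η : ℝ) (hη0 : 0 < η) (hη1 : η < 1)
    (hfixη : (∑' j : ℕ, (j : ℝ) * q j * η ^ (j - 1)) = c * η)
    (hfix1 : (∑' j : ℕ, (j : ℝ) * q j) = c) :
    (∑' j : ℕ, (j : ℝ) * ((j : ℝ) - 1) * q j * η ^ (j - 2)) < c := by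
  set S : ℕ → ℝ := fun j => ∑ k ∈ Finset.range (j - 1), η ^ k with hS
  -- basic facts
  have hηpow : ∀ n : ℕ, η ^ n ≤ 1 := fun n => pow_le_one₀ hη0.le hη1.le
  have hηpow0 : ∀ n : ℕ, 0 ≤ η ^ n := fun n => pow_nonneg hη0.le n
  have hjsq : ∀ j : ℕ, (j : ℝ) ≤ (j : ℝ) ^ 2 := by
    intro j
    rcases Nat.eq_zero_or_pos j with h | h
    · simp [h]
    · have : (1 : ℝ) ≤ j := by exact_mod_cast h
      nlinarith
  -- summability facts
  have hf1 : Summable fun j : ℕ => (j : ℝ) * q j :=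
    hμ2.of_nonneg_of_le (fun j => mul_nonneg (Nat.cast_nonneg j) (hq j))
      (fun j => mul_le_mul_of_nonneg_right (hjsq j) (hq j))
  have hf2 : Summable fun j : ℕ => (j : ℝ) * q j * η ^ (j - 1) :=
    hf1.of_nonneg_of_le
      (fun j => mul_nonneg (mul_nonneg (Nat.cast_nonneg j) (hq j)) (hηpow0 _))
      (fun j => by
        nlinarith [hηpow (j - 1), hηpow0 (j - 1), mul_nonneg (Nat.cast_nonneg (α := ℝ) j) (hq j)])
  have hSle : ∀ j : ℕ, 0 ≤ S j ∧ S j ≤ (j : ℝ) := by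
    intro j
    constructor
    · exact Finset.sum_nonneg fun k _ => hηpow0 k
    · calc S j ≤ ∑ k ∈ Finset.range (j - 1), (1 : ℝ) :=
            Finset.sum_le_sum fun k _ => hηpow k
        _ = ((j - 1 : ℕ) : ℝ) := by simp
        _ ≤ (j : ℝ) := by exact_mod_cast Nat.sub_le j 1
  have hf4 : Summable fun j : ℕ => (j : ℝ) * q j * S j :=
    hμ2.of_nonneg_of_le
      (fun j => mul_nonneg (mul_nonneg (Nat.cast_nonneg j) (hq j)) (hSle j).1)
      (fun j => by
        have h1 := (hSle j).1
        have h2 := (hSle j).2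
        have := mul_nonneg (Nat.cast_nonneg (α := ℝ) j) (hq j)
        nlinarith)
  -- key identity: ∑' j, j * q j * S j = c
  have hgeom : ∀ j : ℕ, (j : ℝ) * q j - (j : ℝ) * q j * η ^ (j - 1)
      = (1 - η) * ((j : ℝ) * q j * S j) := by
    intro j
    have hg := geom_sum_mul η (j - 1)
    have h2 : (1 - η) * S j = 1 - η ^ (j - 1) := by
      simp only [hS]; linear_combination -hg
    linear_combination (-(j : ℝ) * q j) * h2
  have hkey : (∑' j : ℕ, (j : ℝ) * q j * S j) = c := by
    have h1 : (∑' j : ℕ, ((j : ℝ) * q j - (j : ℝ) * q j * η ^ (j - 1))) = c - c * η := by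
      rw [Summable.tsum_sub hf1 hf2, hfix1, hfixη]
    have h2 : (∑' j : ℕ, (1 - η) * ((j : ℝ) * q j * S j)) = (1 - η) * ∑' j : ℕ, (j : ℝ) * q j * S j :=
      tsum_mul_left
    rw [tsum_congr hgeom, h2] at h1
    have hne : (1 - η) ≠ 0 := by linarith
    have : (1 - η) * (∑' j : ℕ, (j : ℝ) * q j * S j) = (1 - η) * c := by
      rw [h1]; ring
    exact mul_left_cancel₀ hne this
  -- existence of j₀ ≥ 3 with q j₀ > 0
  have hex : ∃ j, 3 ≤ j ∧ 0 < q j := by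
    by_contra h
    push_neg at h
    have hz : ∀ j, 3 ≤ j → q j = 0 := fun j hj => le_antisymm (h j hj) (hq j)
    have e1 : (∑' j : ℕ, (j : ℝ) * q j) = 1 * q 1 + 2 * q 2 := by
      rw [tsum_eq_sum (s := ({1, 2} : Finset ℕ)) ?_]
      · simp
      · intro i hi
        rcases Nat.lt_or_ge i 3 with h3 | h3
        · interval_cases i <;> simp_all
        · simp [hz i h3]
    have e2 : (∑' j : ℕ, (j : ℝ) * q j * η ^ (j - 1)) = 1 * q 1 + 2 * q 2 * η := by
      rw [tsum_eq_sum (s := ({1, 2} : Finset ℕ)) ?_]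
      · norm_num
      · intro i hi
        rcases Nat.lt_or_ge i 3 with h3 | h3
        · interval_cases i <;> simp_all
        · simp [hz i h3]
    rw [e1] at hfix1
    rw [e2] at hfixη
    nlinarith
  obtain ⟨j₀, hj₀3, hj₀q⟩ := hex
  -- pointwise inequality
  have hpt : ∀ j : ℕ, (j : ℝ) * ((j : ℝ) - 1) * q j * η ^ (j - 2) ≤ (j : ℝ) * q j * S j := by
    intro j
    rcases Nat.lt_or_ge j 1 with h1 | h1
    · interval_cases j; simp [hS]
    · have hcast : ((j : ℝ) - 1) = ((j - 1 : ℕ) : ℝ) := by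
        push_cast [Nat.cast_sub h1]; ring
      have hterm : ∀ k ∈ Finset.range (j - 1), η ^ (j - 2) ≤ η ^ k := by
        intro k hk
        apply pow_le_pow_of_le_one hη0.le hη1.le
        have := Finset.mem_range.mp hk
        omega
      have hSge : ((j - 1 : ℕ) : ℝ) * η ^ (j - 2) ≤ S j := by
        calc ((j - 1 : ℕ) : ℝ) * η ^ (j - 2) = ∑ k ∈ Finset.range (j - 1), η ^ (j - 2) := by
              simp [mul_comm]
          _ ≤ S j := Finset.sum_le_sum hterm
      have hjq : 0 ≤ (j : ℝ) * q j := mul_nonneg (Nat.cast_nonneg j) (hq j)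
      calc (j : ℝ) * ((j : ℝ) - 1) * q j * η ^ (j - 2)
          = ((j : ℝ) * q j) * (((j - 1 : ℕ) : ℝ) * η ^ (j - 2)) := by rw [← hcast]; ring
        _ ≤ ((j : ℝ) * q j) * S j := mul_le_mul_of_nonneg_left hSge hjq
  -- strict inequality at j₀
  have hstrict : (j₀ : ℝ) * ((j₀ : ℝ) - 1) * q j₀ * η ^ (j₀ - 2) < (j₀ : ℝ) * q j₀ * S j₀ := by
    have h1 : (1 : ℕ) ≤ j₀ := by omega
    have hcast : ((j₀ : ℝ) - 1) = ((j₀ - 1 : ℕ) : ℝ) := by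
      push_cast [Nat.cast_sub h1]; ring
    have hSgt : ((j₀ - 1 : ℕ) : ℝ) * η ^ (j₀ - 2) < S j₀ := by
      have hlt : ∑ k ∈ Finset.range (j₀ - 1), η ^ (j₀ - 2) < S j₀ := by
        apply Finset.sum_lt_sum
        · intro k hk
          apply pow_le_pow_of_le_one hη0.le hη1.le
          have := Finset.mem_range.mp hk
          omega
        · refine ⟨0, Finset.mem_range.mpr (by omega), ?_⟩
          have : η ^ (j₀ - 2) < 1 := by
            apply pow_lt_one₀ hη0.le hη1
            omega
          simpa using this
      calc ((j₀ - 1 : ℕ) : ℝ) * η ^ (j₀ - 2) = ∑ k ∈ Finset.range (j₀ - 1), η ^ (j₀ - 2) := by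
            simp [mul_comm]
        _ < S j₀ := hlt
    have hjq : 0 < (j₀ : ℝ) * q j₀ := by
      apply mul_pos _ hj₀q
      exact_mod_cast Nat.lt_of_lt_of_le (by norm_num) hj₀3
    calc (j₀ : ℝ) * ((j₀ : ℝ) - 1) * q j₀ * η ^ (j₀ - 2)
        = ((j₀ : ℝ) * q j₀) * (((j₀ - 1 : ℕ) : ℝ) * η ^ (j₀ - 2)) := by rw [← hcast]; ring
      _ < ((j₀ : ℝ) * q j₀) * S j₀ := mul_lt_mul_of_pos_left hSgt hjq
  -- nonnegativity of the LHS terms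
  have h0 : ∀ j : ℕ, 0 ≤ (j : ℝ) * ((j : ℝ) - 1) * q j * η ^ (j - 2) := by
    intro j
    rcases Nat.lt_or_ge j 1 with h1 | h1
    · interval_cases j; simp
    · have : (1 : ℝ) ≤ j := by exact_mod_cast h1
      have h2 : (0:ℝ) ≤ (j : ℝ) - 1 := by linarith
      exact mul_nonneg (mul_nonneg (mul_nonneg (by linarith) h2) (hq j)) (hηpow0 _)
  rw [← hkey]
  exact Summable.tsum_lt_tsum_of_nonneg h0 hpt hstrict hf4
end

section
/- For all natural numbers k ≥ 1, l ≥ 1 and real x ∈ (0,1): k·x^(k-2) − (k+l)·x^(k+l-2) + l > 0 (interpreting x^(k-2) as x^{k-2} with the convention x^{-1} = 1/x when k = 1). -/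
/-- For `k, l ≥ 1` and `x ∈ (0,1)`: `k x^(k-2) - (k+l) x^(k+l-2) + l > 0`,
with integer powers (so `x^(-1) = 1/x` when `k = 1`). -/
theorem stmt_14 (k l : ℕ) (hk : 1 ≤ k) (hl : 1 ≤ l) (x : ℝ) (hx0 : 0 < x) (hx1 : x < 1) :
    (k : ℝ) * x ^ ((k : ℤ) - 2) - ((k + l : ℕ) : ℝ) * x ^ ((k : ℤ) + (l : ℤ) - 2) + (l : ℝ) > 0 := by
  have hxne : x ≠ 0 := ne_of_gt hx0
  have h1 : x ^ ((k : ℤ) + (l : ℤ) - 2) = x ^ ((k : ℤ) - 2) * x ^ (l : ℕ) := by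
    rw [← zpow_natCast x l, ← zpow_add₀ hxne]
    ring_nf
  have ha : 0 < x ^ ((k : ℤ) - 2) := zpow_pos hx0 _
  have hxl : x ^ (l : ℕ) < 1 := pow_lt_one₀ hx0.le hx1 (by omega)
  have h2 : x ^ ((k : ℤ) + (l : ℤ) - 2) ≤ 1 := by
    have he : (k : ℤ) + (l : ℤ) - 2 = ((k + l - 2 : ℕ) : ℤ) := by omega
    rw [he, zpow_natCast]
    exact pow_le_one₀ hx0.le hx1.le
  have hk' : (1 : ℝ) ≤ (k : ℝ) := by exact_mod_cast hk
  have hl' : (1 : ℝ) ≤ (l : ℝ) := by exact_mod_cast hl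
  have hcast : ((k + l : ℕ) : ℝ) = (k : ℝ) + (l : ℝ) := by push_cast; ring
  nlinarith [mul_pos (mul_pos (lt_of_lt_of_le one_pos hk') ha) (sub_pos.2 hxl),
    mul_nonneg (le_trans zero_le_one hl') (sub_nonneg.2 h2)]
end
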